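/- The Markov state evaluated at the Jones projection equals the inverse of the index: ψ(e) = (∑ i, (λ i)⁻¹)⁻¹, where ψ(x) := trace((D ⊗ₖ D⁻¹) * x) / trace(D⁻¹). (Lemma 1.2: the value of the Markov state on the Jones projection is (∑ 1/λᵢ)⁻¹.) -/

import Mathlib

open Matrix
open scoped Kronecker

lemma trD {n : ℕ} (d : Fin n → ℂ) (i j : Fin n) :
    Matrix.trace (Matrix.diagonal d * Matrix.single i j 1) =
      if i = j then d i else 0 := by
  simp [Matrix.trace, Matrix.diag, Matrix.diagonal_mul, Matrix.single,
    Finset.sum_ite_eq, and_comm]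
  rcases eq_or_ne i j with h | h
  · subst h; simp
  · rw [Finset.sum_eq_zero, if_neg h]
    intro x _
    rw [if_neg]
    rintro ⟨rfl, rfl⟩; exact h rfl

/-- The Markov state `ψ(x) = trace((D ⊗ₖ D⁻¹) * x) / trace(D⁻¹)` evaluated at the
Jones projection `e` equals `(∑ i, (λ i)⁻¹)⁻¹`, the inverse of the index. -/
theorem markov_state_on_jones_projection
    (n : ℕ) (hn : 1 ≤ n) (lam : Fin n → ℝ)
    (hpos : ∀ i, 0 < lam i) (hsum : ∑ i, lam i = 1)
    (D Dinv : Matrix (Fin n) (Fin n) ℂ)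
    (hD : D = Matrix.diagonal (fun i => (lam i : ℂ)))
    (hDinv : Dinv = Matrix.diagonal (fun i => ((lam i)⁻¹ : ℂ)))
    (E : Fin n → Fin n → Matrix (Fin n) (Fin n) ℂ)
    (hE : ∀ i j, E i j = Matrix.single i j (1 : ℂ))
    (e : Matrix (Fin n × Fin n) (Fin n × Fin n) ℂ)
    (he : e = ∑ i, ∑ j, ((Real.sqrt (lam i * lam j) : ℝ) : ℂ) • (E i j ⊗ₖ E i j))
    (ψ : Matrix (Fin n × Fin n) (Fin n × Fin n) ℂ → ℂ)
    (hψ : ∀ x, ψ x = Matrix.trace ((D ⊗ₖ Dinv) * x) / Matrix.trace Dinv) :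
    ψ e = (∑ i, ((lam i)⁻¹ : ℂ))⁻¹ := by
  rw [hψ, he, hD, hDinv]
  have htr : Matrix.trace
      ((Matrix.diagonal (fun i => (lam i : ℂ)) ⊗ₖ Matrix.diagonal fun i => ((lam i)⁻¹ : ℂ)) *
        ∑ i, ∑ j, ((Real.sqrt (lam i * lam j) : ℝ) : ℂ) • (E i j ⊗ₖ E i j)) = 1 := by
    simp only [Finset.mul_sum, Matrix.mul_smul, Matrix.trace_sum, Matrix.trace_smul, hE,
      ← Matrix.mul_kronecker_mul, Matrix.trace_kronecker, trD]
    rw [Finset.sum_comm]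
    have : ∀ j : Fin n, (∑ i : Fin n, ((Real.sqrt (lam i * lam j) : ℝ) : ℂ) •
        ((if i = j then (lam i : ℂ) else 0) * (if i = j then ((lam i)⁻¹ : ℂ) else 0)))
        = (lam j : ℂ) := by
      intro j
      rw [Finset.sum_eq_single j]
      · rw [if_pos rfl, Real.sqrt_mul_self (hpos j).le]
        rw [smul_eq_mul]
        field_simp
        rw [if_pos trivial]
        have hl : (lam j : ℂ) ≠ 0 := Complex.ofReal_ne_zero.mpr (hpos j).ne'
        field_simp [hl]
      · intro b _ hb; rw [if_neg hb]; simp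
      · simp
    rw [Finset.sum_congr rfl fun j _ => this j, ← Complex.ofReal_sum]
    simp [hsum]
  rw [htr]
  rw [Matrix.trace_diagonal, one_div]
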